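/- For every (α,β,γ,δ) ∈ (K^*)^3 × K, the formulas v_k·e1 = α v_{k+1 (mod l)}, v_k·e3 = q^{-2k} β v_k, v_k·z = γ v_k, v_k·w = α^{-1}(δ + ((1-q^{-4k})/(1-q^{-4})) β^2) v_{k-1 (mod l)} (for 0 ≤ k ≤ l-1) define a right B-module structure on the K-vector space with basis v_0,…,v_{l-1}, and the resulting module V1(α,β,γ,δ) is a simple B-module of K-dimension l. -/

import Mathlib

noncomputable section

open MulOpposite

/-- The defining relations of the "good" subalgebra `B` of `U_q^+(B_2)`, on the free algebra
on generators `e1 = ι 0`, `e3 = ι 1`, `z = ι 2`, `w = ι 3`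
(where `w = e2·e3 + z/(q^2-1)` inside `U_q^+(B_2)`). -/
inductive BqRel (K : Type*) [Field K] (q : K) :
    FreeAlgebra K (Fin 4) → FreeAlgebra K (Fin 4) → Prop
  | e1e3 : BqRel K q (FreeAlgebra.ι K 0 * FreeAlgebra.ι K 1)
      (q⁻¹ ^ 2 • (FreeAlgebra.ι K 1 * FreeAlgebra.ι K 0))
  | e1z : BqRel K q (FreeAlgebra.ι K 0 * FreeAlgebra.ι K 2)
      (FreeAlgebra.ι K 2 * FreeAlgebra.ι K 0)
  | e3z : BqRel K q (FreeAlgebra.ι K 1 * FreeAlgebra.ι K 2)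
      (FreeAlgebra.ι K 2 * FreeAlgebra.ι K 1)
  | wz : BqRel K q (FreeAlgebra.ι K 3 * FreeAlgebra.ι K 2)
      (FreeAlgebra.ι K 2 * FreeAlgebra.ι K 3)
  | we3 : BqRel K q (FreeAlgebra.ι K 3 * FreeAlgebra.ι K 1)
      (q ^ 2 • (FreeAlgebra.ι K 1 * FreeAlgebra.ι K 3))
  | we1 : BqRel K q (FreeAlgebra.ι K 3 * FreeAlgebra.ι K 0)
      (FreeAlgebra.ι K 0 * FreeAlgebra.ι K 3 - FreeAlgebra.ι K 1 ^ 2)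

/-- The algebra `B`, presented by generators `e1, e3, z, w` and the relations above. -/
abbrev Bq (K : Type*) [Field K] (q : K) : Type _ := RingQuot (BqRel K q)

variable (K : Type*) [Field K] (q : K)

/-- The generator `e1` of `B`. -/
def Be1 : Bq K q := RingQuot.mkAlgHom K (BqRel K q) (FreeAlgebra.ι K 0)
/-- The generator `e3` of `B`. -/
def Be3 : Bq K q := RingQuot.mkAlgHom K (BqRel K q) (FreeAlgebra.ι K 1)
/-- The generator `z` of `B`. -/
def Bz : Bq K q := RingQuot.mkAlgHom K (BqRel K q) (FreeAlgebra.ι K 2)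
/-- The generator `w` of `B`. -/
def Bw : Bq K q := RingQuot.mkAlgHom K (BqRel K q) (FreeAlgebra.ι K 3)

/-- A "weighted shift" endomorphism of `Fin l → K`. -/
def sop {K : Type*} [Field K] {l : ℕ} (s : Fin l → K) (σ : Fin l → Fin l) :
    Module.End K (Fin l → K) where
  toFun v := fun j => s j * v (σ j)
  map_add' u v := by funext j; simp [mul_add]
  map_smul' c v := by funext j; simp [Pi.smul_apply, smul_eq_mul]; ring

@[simp] lemma sop_apply {K : Type*} [Field K] {l : ℕ} (s : Fin l → K) (σ : Fin l → Fin l)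
    (v : Fin l → K) (j : Fin l) : sop s σ v j = s j * v (σ j) := rfl

/-- For `(α,β,γ,δ) ∈ (K^*)^3 × K`, the formulas
`v_k·e1 = α v_{k+1 (mod l)}`, `v_k·e3 = q^{-2k} β v_k`, `v_k·z = γ v_k`,
`v_k·w = α⁻¹(δ + ((1-q^{-4k})/(1-q^{-4})) β^2) v_{k-1 (mod l)}` define a right `B`-module
structure (an algebra map `B →ₐ (End (Fin l → K))ᵐᵒᵖ`) on the `K`-vector space with basis
`v_0, …, v_{l-1}`, and the resulting module `V1(α,β,γ,δ)` is simple of `K`-dimension `l`. -/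
theorem stmt9 (m : ℕ) (hm : 5 ≤ m) (hq : IsPrimitiveRoot q m)
    (l : ℕ) (hl : l = if Odd m then m else m / 2)
    (α β γ δ : K) (hα : α ≠ 0) (hβ : β ≠ 0) (hγ : γ ≠ 0) :
    ∃ ρ : Bq K q →ₐ[K] (Module.End K (Fin l → K))ᵐᵒᵖ,
      (∀ k : Fin l, (ρ (Be1 K q)).unop (Pi.single k 1) =
        α • (Pi.single (finRotate l k) 1 : Fin l → K)) ∧
      (∀ k : Fin l, (ρ (Be3 K q)).unop (Pi.single k 1) =
        (q⁻¹ ^ (2 * (k : ℕ)) * β) • (Pi.single k 1 : Fin l → K)) ∧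
      (∀ k : Fin l, (ρ (Bz K q)).unop (Pi.single k 1) =
        γ • (Pi.single k 1 : Fin l → K)) ∧
      (∀ k : Fin l, (ρ (Bw K q)).unop (Pi.single k 1) =
        (α⁻¹ * (δ + ((1 - q⁻¹ ^ (4 * (k : ℕ))) / (1 - q⁻¹ ^ 4)) * β ^ 2)) •
          (Pi.single ((finRotate l).symm k) 1 : Fin l → K)) ∧
      Nontrivial (Fin l → K) ∧
      (∀ W : Submodule K (Fin l → K),
        (∀ b : Bq K q, ∀ v ∈ W, (ρ b).unop v ∈ W) → W = ⊥ ∨ W = ⊤) ∧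
      Module.finrank K (Fin l → K) = l := by
  have hm0 : 0 < m := by omega
  have hq0 : q ≠ 0 := hq.ne_zero (by omega)
  -- `l ≥ 2`
  obtain ⟨n, rfl⟩ : ∃ n, l = n + 2 := by
    refine ⟨l - 2, ?_⟩
    rcases Nat.even_or_odd m with he | ho
    · rw [hl, if_neg (by simpa [Nat.not_odd_iff_even] using he)]; omega
    · rw [hl, if_pos ho]; omega
  -- `q ^ (2 l) = 1`
  have hlodd : Odd m → n + 2 = m := fun ho => by rw [hl, if_pos ho]
  have hleven : ¬ Odd m → 2 * (n + 2) = m := by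
    intro he
    rcases Nat.even_or_odd m with ⟨r, hr⟩ | ho
    · rw [hl, if_neg he]; omega
    · exact absurd ho he
  have hq2l : q ^ (2 * (n + 2)) = 1 := by
    by_cases ho : Odd m
    · rw [mul_comm, pow_mul, hlodd ho, hq.pow_eq_one, one_pow]
    · rw [hleven ho, hq.pow_eq_one]
  have hU2l : (q⁻¹) ^ (2 * (n + 2)) = 1 := by rw [inv_pow, hq2l, inv_one]
  have hX : ((q⁻¹) ^ 2) ^ (n + 2) = 1 := by rw [← pow_mul]; exact hU2l
  have hX4 : ((q⁻¹) ^ 4) ^ (n + 2) = 1 := by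
    rw [← pow_mul, show 4 * (n + 2) = 2 * (n + 2) * 2 by ring, pow_mul, hU2l, one_pow]
  have key2 : ∀ a b : ℕ, a % (n + 2) = b % (n + 2) → (q⁻¹) ^ (2 * a) = (q⁻¹) ^ (2 * b) := by
    intro a b h
    rw [pow_mul, pow_mul, pow_eq_pow_mod a hX, pow_eq_pow_mod b hX, h]
  have key4 : ∀ a b : ℕ, a % (n + 2) = b % (n + 2) → (q⁻¹) ^ (4 * a) = (q⁻¹) ^ (4 * b) := by
    intro a b h
    rw [pow_mul, pow_mul, pow_eq_pow_mod a hX4, pow_eq_pow_mod b hX4, h]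
  -- Fin arithmetic facts
  have eadd : ∀ k : Fin (n + 2), ((k + 1 : Fin (n + 2)) : ℕ) = ((k : ℕ) + 1) % (n + 2) := by
    intro k; rw [Fin.val_add, Fin.val_one]
  have cadd : ∀ k : Fin (n + 2), ((k + 1 : Fin (n + 2)) : ℕ) % (n + 2) = ((k : ℕ) + 1) % (n + 2) := by
    intro k; rw [eadd k]; exact Nat.mod_mod_of_dvd _ dvd_rfl
  have csub : ∀ k : Fin (n + 2), (((k - 1 : Fin (n + 2)) : ℕ) + 1) % (n + 2) = (k : ℕ) % (n + 2) := by
    intro k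
    rw [← eadd (k - 1), sub_add_cancel, Nat.mod_eq_of_lt k.isLt]
  -- coefficients and operators
  set d : Fin (n + 2) → K := fun k => q⁻¹ ^ (2 * (k : ℕ)) * β with hd
  set c : Fin (n + 2) → K :=
    fun k => α⁻¹ * (δ + ((1 - q⁻¹ ^ (4 * (k : ℕ))) / (1 - q⁻¹ ^ 4)) * β ^ 2) with hc
  set E1 : Module.End K (Fin (n + 2) → K) := sop (fun _ => α) (fun j => j - 1) with hE1
  set E3 : Module.End K (Fin (n + 2) → K) := sop d id with hE3
  set Zo : Module.End K (Fin (n + 2) → K) := sop (fun _ => γ) id with hZo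
  set Wo : Module.End K (Fin (n + 2) → K) := sop (fun j => c (j + 1)) (fun j => j + 1) with hWo
  have hone : (1 : K) - q⁻¹ ^ 4 ≠ 0 := by
    have h4 : q ^ 4 ≠ 1 := hq.pow_ne_one_of_pos_of_lt (by norm_num) (by omega)
    have : q⁻¹ ^ 4 ≠ 1 := by
      rw [inv_pow]
      intro h
      exact h4 (by rw [← inv_inv (q ^ 4), h, inv_one])
    exact sub_ne_zero.mpr (Ne.symm this)
  -- shifted-coefficient identities
  have hdsub : ∀ j : Fin (n + 2), d j = q⁻¹ ^ 2 * d (j - 1) := by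
    intro j
    have : (q⁻¹) ^ (2 * ((j : ℕ))) = (q⁻¹) ^ (2 * (((j - 1 : Fin (n + 2)) : ℕ) + 1)) :=
      key2 _ _ (by rw [csub j, Nat.mod_eq_of_lt j.isLt])
    simp only [hd]
    rw [this, mul_add, mul_one, pow_add]
    ring
  have hdadd : ∀ j : Fin (n + 2), d j = q ^ 2 * d (j + 1) := by
    intro j
    have h1 : (q⁻¹) ^ (2 * (((j + 1 : Fin (n + 2))) : ℕ)) = (q⁻¹) ^ (2 * ((j : ℕ) + 1)) :=
      key2 _ _ (cadd j)
    have h2 : q ^ 2 * q⁻¹ ^ 2 = 1 := by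
      rw [inv_pow, mul_inv_cancel₀ (pow_ne_zero _ hq0)]
    simp only [hd]
    rw [h1, mul_add, mul_one, pow_add]
    linear_combination (-(q⁻¹ ^ (2 * (j : ℕ)) * β)) * h2
  have hcadd : ∀ j : Fin (n + 2), c (j + 1) * α - d j * d j = α * c j := by
    intro j
    have h1 : (q⁻¹) ^ (4 * (((j + 1 : Fin (n + 2))) : ℕ)) =
        (q⁻¹) ^ (4 * ((j : ℕ))) * (q⁻¹) ^ 4 := by
      rw [key4 _ _ (cadd j), Nat.mul_succ, pow_add]
    have h2 : d j * d j = (q⁻¹) ^ (4 * ((j : ℕ))) * β ^ 2 := by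
      simp only [hd]
      rw [show (4 : ℕ) * (j : ℕ) = 2 * (j:ℕ) + 2 * (j:ℕ) by ring, pow_add]; ring
    have ht : (1 - q⁻¹ ^ 4) * (1 - q⁻¹ ^ 4)⁻¹ = 1 := mul_inv_cancel₀ hone
    have hαα : α * α⁻¹ = 1 := mul_inv_cancel₀ hα
    simp only [hc]
    rw [h1, h2]
    linear_combination (q⁻¹ ^ (4 * (j : ℕ)) * β ^ 2 * α * α⁻¹) * ht +
      (q⁻¹ ^ (4 * (j : ℕ)) * β ^ 2) * hαα
  -- the algebra morphism
  set g : Fin 4 → (Module.End K (Fin (n + 2) → K))ᵐᵒᵖ := ![op E1, op E3, op Zo, op Wo] with hg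
  set F : FreeAlgebra K (Fin 4) →ₐ[K] (Module.End K (Fin (n + 2) → K))ᵐᵒᵖ :=
    FreeAlgebra.lift K g with hF
  have hF0 : F (FreeAlgebra.ι K 0) = op E1 := by simp [hF, hg]
  have hF1 : F (FreeAlgebra.ι K 1) = op E3 := by simp [hF, hg]
  have hF2 : F (FreeAlgebra.ι K 2) = op Zo := by simp [hF, hg]
  have hF3 : F (FreeAlgebra.ι K 3) = op Wo := by simp [hF, hg]
  have hrel : ∀ ⦃a b : FreeAlgebra K (Fin 4)⦄, BqRel K q a b → F a = F b := by
    intro a b h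
    cases h with
    | e1e3 =>
        rw [map_mul, map_smul, map_mul, hF0, hF1, ← op_mul, ← op_mul, ← op_smul]
        refine congrArg op ?_
        refine LinearMap.ext fun v => funext fun j => ?_
        simp only [hE1, hE3, Module.End.mul_apply, LinearMap.smul_apply, sop_apply, id_eq,
          Pi.smul_apply, smul_eq_mul]
        rw [hdsub j]; ring
    | e1z =>
        rw [map_mul, map_mul, hF0, hF2, ← op_mul, ← op_mul]
        refine congrArg op ?_
        refine LinearMap.ext fun v => funext fun j => ?_
        simp only [hE1, hZo, Module.End.mul_apply, sop_apply, id_eq]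
        ring
    | e3z =>
        rw [map_mul, map_mul, hF1, hF2, ← op_mul, ← op_mul]
        refine congrArg op ?_
        refine LinearMap.ext fun v => funext fun j => ?_
        simp only [hE3, hZo, Module.End.mul_apply, sop_apply, id_eq]
        ring
    | wz =>
        rw [map_mul, map_mul, hF3, hF2, ← op_mul, ← op_mul]
        refine congrArg op ?_
        refine LinearMap.ext fun v => funext fun j => ?_
        simp only [hWo, hZo, Module.End.mul_apply, sop_apply, id_eq]
        ring
    | we3 =>
        rw [map_mul, map_smul, map_mul, hF3, hF1, ← op_mul, ← op_mul, ← op_smul]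
        refine congrArg op ?_
        refine LinearMap.ext fun v => funext fun j => ?_
        simp only [hE3, hWo, Module.End.mul_apply, LinearMap.smul_apply, sop_apply, id_eq,
          Pi.smul_apply, smul_eq_mul]
        rw [hdadd j]; ring
    | we1 =>
        rw [map_mul, map_sub, map_mul, map_pow, hF3, hF0, hF1, ← op_mul, ← op_mul,
          ← op_pow, ← op_sub]
        refine congrArg op ?_
        refine LinearMap.ext fun v => funext fun j => ?_
        simp only [hE1, hE3, hWo, Module.End.mul_apply, LinearMap.sub_apply, Pi.sub_apply,
          pow_two, sop_apply, id_eq]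
        rw [sub_add_cancel, add_sub_cancel_right]
        have := hcadd j
        linear_combination (-(v j)) * this
  refine ⟨RingQuot.liftAlgHom K ⟨F, hrel⟩, ?_⟩
  set ρ := RingQuot.liftAlgHom K ⟨F, hrel⟩ with hρ
  have hρ1 : (ρ (Be1 K q)).unop = E1 := by
    rw [hρ, Be1, RingQuot.liftAlgHom_mkAlgHom_apply, hF0, unop_op]
  have hρ3 : (ρ (Be3 K q)).unop = E3 := by
    rw [hρ, Be3, RingQuot.liftAlgHom_mkAlgHom_apply, hF1, unop_op]
  have hρz : (ρ (Bz K q)).unop = Zo := by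
    rw [hρ, Bz, RingQuot.liftAlgHom_mkAlgHom_apply, hF2, unop_op]
  have hρw : (ρ (Bw K q)).unop = Wo := by
    rw [hρ, Bw, RingQuot.liftAlgHom_mkAlgHom_apply, hF3, unop_op]
  -- action on basis vectors
  have hE1s : ∀ k : Fin (n + 2), E1 (Pi.single k 1) = α • (Pi.single (k + 1) 1 : Fin (n + 2) → K) := by
    intro k; funext j
    simp only [hE1, sop_apply, Pi.smul_apply, Pi.single_apply, smul_eq_mul,
      sub_eq_iff_eq_add]
  have hE3s : ∀ k : Fin (n + 2), E3 (Pi.single k 1) = d k • (Pi.single k 1 : Fin (n + 2) → K) := by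
    intro k; funext j
    by_cases h : j = k
    · subst h; simp [hE3]
    · simp [hE3, Pi.single_apply, h]
  have hZs : ∀ k : Fin (n + 2), Zo (Pi.single k 1) = γ • (Pi.single k 1 : Fin (n + 2) → K) := by
    intro k; funext j
    by_cases h : j = k
    · subst h; simp [hZo]
    · simp [hZo, Pi.single_apply, h]
  have hWs : ∀ k : Fin (n + 2), Wo (Pi.single k 1) = c k • (Pi.single (k - 1) 1 : Fin (n + 2) → K) := by
    intro k; funext j
    by_cases h : j = k - 1
    · subst h
      rw [hWo]
      simp only [sop_apply, Pi.smul_apply, smul_eq_mul, sub_add_cancel, Pi.single_eq_same,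
        mul_one]
    · have h' : j + 1 ≠ k := fun hc => h (by rw [← hc, add_sub_cancel_right])
      simp [hWo, Pi.single_apply, h, h']
  -- simplicity infrastructure
  have hprim : IsPrimitiveRoot (q⁻¹ ^ 2) (n + 2) := by
    have : IsPrimitiveRoot (q ^ 2) (n + 2) := by
      rcases Nat.even_or_odd m with he | ho
      · have hLm : m = 2 * (n + 2) :=
          ((hleven (by simpa [Nat.not_odd_iff_even] using he)).symm)
        exact hq.pow hm0 hLm
      · rw [hlodd ho]
        exact hq.pow_of_coprime 2 (Nat.coprime_two_left.mpr ho)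
    have h2 := this.inv
    rwa [← inv_pow] at h2
  have hdinj : Function.Injective d := by
    intro a b hab
    simp only [hd] at hab
    have hab' := mul_right_cancel₀ hβ hab
    rw [pow_mul, pow_mul] at hab'
    exact Fin.ext (hprim.pow_inj a.isLt b.isLt hab')
  -- the existence statement
  refine ⟨?_, ?_, ?_, ?_, ?_, ?_, ?_⟩
  · intro k
    rw [hρ1, hE1s k, show finRotate (n + 2) k = k + 1 from finRotate_succ_apply k]
  · intro k
    rw [hρ3, hE3s k]
  · intro k
    rw [hρz, hZs k]
  · intro k
    rw [hρw, hWs k, show (finRotate (n + 2)).symm k = k - 1 by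
      rw [Equiv.symm_apply_eq, finRotate_succ_apply, sub_add_cancel]]
  · exact ⟨0, Pi.single 0 1, fun h => one_ne_zero (congrFun h 0).symm⟩
  · -- simplicity
    intro Wsub hWsub
    by_cases hbot : Wsub = ⊥
    · exact Or.inl hbot
    right
    obtain ⟨v, hvW, hv0⟩ := Submodule.exists_mem_ne_zero_of_ne_bot hbot
    have hDinv : ∀ x ∈ Wsub, E3 x ∈ Wsub := by
      intro x hx
      have := hWsub (Be3 K q) x hx
      rwa [hρ3] at this
    have hE1inv : ∀ x ∈ Wsub, E1 x ∈ Wsub := by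
      intro x hx
      have := hWsub (Be1 K q) x hx
      rwa [hρ1] at this
    -- products of (D - d j) stay in Wsub and act diagonally
    have hstepB : ∀ s : Finset (Fin (n + 2)), ∀ x ∈ Wsub,
        (fun i => (∏ j ∈ s, (d i - d j)) * x i) ∈ Wsub := by
      intro s
      induction s using Finset.induction_on with
      | empty => intro x hx; simpa using hx
      | insert a s ha ih =>
          intro x hx
          have hy := ih x hx
          set y : Fin (n + 2) → K := fun i => (∏ j ∈ s, (d i - d j)) * x i with hyd
          have hmem : E3 y - d a • y ∈ Wsub :=
            Submodule.sub_mem _ (hDinv y hy) (Submodule.smul_mem _ _ hy)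
          have : (fun i => (∏ j ∈ insert a s, (d i - d j)) * x i) = E3 y - d a • y := by
            funext i
            simp only [hE3, Pi.sub_apply, Pi.smul_apply, sop_apply, id_eq, smul_eq_mul, hyd,
              Finset.prod_insert ha]
            ring
          rwa [this]
    -- singles of elements of Wsub are in Wsub
    have hsingle : ∀ x ∈ Wsub, ∀ k : Fin (n + 2), Pi.single k (x k) ∈ Wsub := by
      intro x hx k
      set s : Finset (Fin (n + 2)) := Finset.univ.erase k with hs
      set P : K := ∏ j ∈ s, (d k - d j) with hP
      have hPne : P ≠ 0 := by
        rw [hP]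
        refine Finset.prod_ne_zero_iff.mpr fun j hj => ?_
        have hjk : j ≠ k := Finset.ne_of_mem_erase hj
        exact sub_ne_zero.mpr fun hce => hjk (hdinj hce.symm)
      have hmemB := hstepB s x hx
      have heq : (fun i => (∏ j ∈ s, (d i - d j)) * x i)
          = P • (Pi.single k (x k) : Fin (n + 2) → K) := by
        funext i
        by_cases hik : i = k
        · subst hik; simp [hP]
        · have hmem : i ∈ s := Finset.mem_erase.mpr ⟨hik, Finset.mem_univ i⟩
          rw [Finset.prod_eq_zero hmem (by ring)]
          simp [Pi.single_apply, hik]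
      rw [heq] at hmemB
      have := Submodule.smul_mem Wsub P⁻¹ hmemB
      rwa [smul_smul, inv_mul_cancel₀ hPne, one_smul] at this
    obtain ⟨k0, hk0⟩ : ∃ k, v k ≠ 0 := by
      by_contra h
      push_neg at h
      exact hv0 (funext fun i => h i)
    have hk0W : Pi.single k0 (1 : K) ∈ Wsub := by
      have h1 := hsingle v hvW k0
      have h2 := Submodule.smul_mem Wsub (v k0)⁻¹ h1
      have : (v k0)⁻¹ • (Pi.single k0 (v k0) : Fin (n + 2) → K)
          = (Pi.single k0 (1:K) : Fin (n + 2) → K) := by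
        funext i
        by_cases h : i = k0
        · subst h; simp [inv_mul_cancel₀ hk0]
        · simp [Pi.single_apply, h]
      rwa [this] at h2
    have hnext : ∀ k : Fin (n + 2), Pi.single k (1 : K) ∈ Wsub →
        Pi.single (k + 1) (1 : K) ∈ Wsub := by
      intro k hk
      have h1 := hE1inv _ hk
      rw [hE1s k] at h1
      have h2 := Submodule.smul_mem Wsub α⁻¹ h1
      rwa [smul_smul, inv_mul_cancel₀ hα, one_smul] at h2
    open Fin.NatCast in
    have hiter : ∀ t : ℕ, Pi.single (k0 + (t : Fin (n + 2))) (1 : K) ∈ Wsub := by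
      intro t
      induction t with
      | zero => simpa using hk0W
      | succ t ih =>
          have h1 := hnext _ ih
          have h2 : ((t + 1 : ℕ) : Fin (n + 2)) = (t : Fin (n + 2)) + 1 := by push_cast; ring
          rw [h2, ← add_assoc]
          exact h1
    have hall : ∀ j : Fin (n + 2), Pi.single j (1 : K) ∈ Wsub := by
      intro j
      have := hiter ((j - k0 : Fin (n + 2)) : ℕ)
      rwa [Fin.cast_val_eq_self, add_sub_cancel] at this
    refine Submodule.eq_top_iff'.mpr fun x => ?_
    have hx : x = ∑ i, Pi.single i (x i) := (Finset.univ_sum_single x).symm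
    rw [hx]
    refine Submodule.sum_mem _ fun i _ => ?_
    have : Pi.single i (x i) = x i • (Pi.single i 1 : Fin (n + 2) → K) := by
      funext j
      by_cases h : j = i
      · subst h; simp
      · simp [Pi.single_apply, h]
    rw [this]
    exact Submodule.smul_mem _ _ (hall i)
  · simp [Module.finrank_pi]
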